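/- A 1-cell (Y, D) with Y ≠ ∅ is a face of exactly two 0-cells, and each of these two 0-cells is either balanced or has the same type as (Y, D). -/

import Mathlib

/-- `X ⊆ T` is dominant with respect to `C ⊆ I` (for the family of linear orders `o`)
if either `X = ∅`, or `X ≠ ∅` and there is no `y : T` with `min_i X <_i y` for all `i ∈ C`. -/
def Dominant {T I : Type*} (o : I → LinearOrder T) (X : Finset T) (C : Finset I) : Prop :=
  ∀ hX : X.Nonempty, ¬ ∃ y : T, ∀ i ∈ C, (o i).lt (@Finset.min' T (o i) X hX) y

/-- A pair `(X, C)` is a cell if `C ≠ ∅`, `X` is dominant with respect to `C`,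
and `|C \ c(X)| ≤ 1`. -/
def IsCell {T I : Type*} [DecidableEq T] [DecidableEq I]
    (o : I → LinearOrder T) (c : T → I) (X : Finset T) (C : Finset I) : Prop :=
  C.Nonempty ∧ Dominant o X C ∧ (C \ X.image c).card ≤ 1

/-- A 0-cell is a cell `(X, C)` with `|C| = |X|`. -/
def IsZeroCell {T I : Type*} [DecidableEq T] [DecidableEq I]
    (o : I → LinearOrder T) (c : T → I) (X : Finset T) (C : Finset I) : Prop :=
  IsCell o c X C ∧ C.card = X.card

/-- A 1-cell is a cell `(X, C)` with `|C| = |X| + 1`. -/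
def IsOneCell {T I : Type*} [DecidableEq T] [DecidableEq I]
    (o : I → LinearOrder T) (c : T → I) (X : Finset T) (C : Finset I) : Prop :=
  IsCell o c X C ∧ C.card = X.card + 1

/-- A 1-cell `(Y, D)` is a face of a 0-cell `(X, C)` if either `D = C` and
`Y = X \ {x}` for some `x ∈ X`, or `Y = X` and `D = C ∪ {i}` for some `i ∉ C`. -/
def IsFace {T I : Type*} [DecidableEq T] [DecidableEq I]
    (o : I → LinearOrder T) (c : T → I)
    (Y : Finset T) (D : Finset I) (X : Finset T) (C : Finset I) : Prop :=
  IsOneCell o c Y D ∧ IsZeroCell o c X C ∧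
    ((D = C ∧ ∃ x ∈ X, Y = X.erase x) ∨ (Y = X ∧ ∃ i, i ∉ C ∧ D = insert i C))

/-- A 1-cell `(Y, D)` with `Y ≠ ∅` is a face of exactly two 0-cells, and each of
these 0-cells is either balanced or has the same type as `(Y, D)`. -/
theorem stmt9 {T I : Type*} [Fintype T] [Fintype I] [Nonempty T] [Nonempty I]
    [DecidableEq T] [DecidableEq I] (o : I → LinearOrder T) (c : T → I)
    (Y : Finset T) (D : Finset I) (h1 : IsOneCell o c Y D) (hY : Y.Nonempty) :
    (∃ p q : Finset T × Finset I, p ≠ q ∧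
        ∀ r : Finset T × Finset I, IsFace o c Y D r.1 r.2 ↔ (r = p ∨ r = q)) ∧
    (∀ X C, IsFace o c Y D X C →
        (C = X.image c ∨ C \ X.image c = D \ Y.image c)) := by
  classical
  obtain ⟨⟨hDne, hdom, hcol⟩, hcard⟩ := h1
  have h1' : IsOneCell o c Y D := ⟨⟨hDne, hdom, hcol⟩, hcard⟩
  -- order helpers
  have hlt_of_nle : ∀ (i : I) (a b : T), ¬ (o i).le a b → (o i).lt b a := fun i a b h => by
    letI := o i; exact not_le.mp h
  have hnlt_of_le : ∀ (i : I) (a b : T), (o i).le a b → ¬ (o i).lt b a := fun i a b h => by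
    letI := o i; exact not_lt.mpr h
  have hanti : ∀ (i : I) (a b : T), (o i).le a b → (o i).le b a → a = b := fun i a b h h' => by
    letI := o i; exact le_antisymm h h'
  have htrans : ∀ (i : I) (a b c' : T), (o i).le a b → (o i).le b c' → (o i).le a c' :=
    fun i a b c' h h' => by letI := o i; exact le_trans h h'
  have hrefl : ∀ (i : I) (a : T), (o i).le a a := fun i a => (o i).le_refl a
  -- minima of Y
  set m : I → T := fun i => @Finset.min' T (o i) Y hY with hm
  have hmY : ∀ i, m i ∈ Y := fun i => @Finset.min'_mem T (o i) Y hY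
  have hm_min : ∀ (i : I) (y : T), y ∈ Y → (o i).le (m i) y :=
    fun i y hy => @Finset.min'_le T (o i) Y y hy
  -- witness extraction from dominance (generic)
  have hwitOf : ∀ (X : Finset T) (C : Finset I) (hXne : X.Nonempty), Dominant o X C →
      ∀ z : T, ∃ i ∈ C, (o i).le z (@Finset.min' T (o i) X hXne) := by
    intro X C hXne hd z
    by_contra hcon
    push_neg at hcon
    exact hd hXne ⟨z, fun i hi => hcon i hi⟩
  have hwit : ∀ z : T, ∃ i ∈ D, (o i).le z (m i) := fun z => hwitOf Y D hY hdom z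
  have hyeq : ∀ (y : T), y ∈ Y → ∀ (i : I), (o i).le y (m i) → y = m i :=
    fun y hy i h => hanti i y (m i) h (hm_min i y hy)
  -- the doubled point
  obtain ⟨j, hjD, k, hkD, hjk, hmjk⟩ :=
    Finset.exists_ne_map_eq_of_card_lt_of_maps_to (t := Y)
      (by omega : Y.card < D.card) (fun i _ => hmY i)
  -- injectivity off j
  have hsurjE : ∀ y ∈ Y, ∃ i ∈ D.erase j, m i = y := by
    intro y hy
    obtain ⟨i, hiD, hile⟩ := hwit y
    have hiy : y = m i := hyeq y hy i hile
    by_cases hij : i = j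
    · exact ⟨k, Finset.mem_erase.mpr ⟨fun h => hjk h.symm, hkD⟩, by rw [← hmjk, ← hij, ← hiy]⟩
    · exact ⟨i, Finset.mem_erase.mpr ⟨hij, hiD⟩, hiy.symm⟩
  have hinjE : ∀ a ∈ D.erase j, ∀ b ∈ D.erase j, m a = m b → a = b := by
    have himg : (D.erase j).image m = Y := by
      apply Finset.Subset.antisymm
      · intro y hy
        obtain ⟨i, _, rfl⟩ := Finset.mem_image.mp hy
        exact hmY i
      · intro y hy
        obtain ⟨i, hi, hiy⟩ := hsurjE y hy
        exact Finset.mem_image.mpr ⟨i, hi, hiy⟩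
    have hinj := Finset.injOn_of_card_image_eq (f := m) (s := D.erase j)
      (by rw [himg, Finset.card_erase_of_mem hjD]; omega)
    exact fun a ha b hb hab => hinj ha hb hab
  have hfib : ∀ i ∈ D, m i = m j → i = j ∨ i = k := by
    intro i hiD hij
    by_contra hcon
    push_neg at hcon
    exact hcon.2 (hinjE i (Finset.mem_erase.mpr ⟨hcon.1, hiD⟩) k
      (Finset.mem_erase.mpr ⟨fun h => hjk h.symm, hkD⟩) (by rw [hij, hmjk]))
  have huniq : ∀ i ∈ D, i ≠ j → i ≠ k → ∀ i' ∈ D, m i' = m i → i' = i := by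
    intro i hiD hij hik i' hi'D heq
    have hi'j : i' ≠ j := by
      rintro rfl
      rcases hfib i hiD heq.symm with h | h
      · exact hij h
      · exact hik h
    exact hinjE i' (Finset.mem_erase.mpr ⟨hi'j, hi'D⟩) i (Finset.mem_erase.mpr ⟨hij, hiD⟩) heq
  -- the critical sets
  set Z : I → Finset T := fun l =>
    Finset.univ.filter (fun z => ∀ i' ∈ D, (o i').le z (m i') → i' = l) with hZ
  have hZmem : ∀ (l : I) (z : T), z ∈ Z l ↔ ∀ i' ∈ D, (o i').le z (m i') → i' = l := by
    intro l z
    simp [hZ]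
  have hZwit : ∀ (l : I), l ∈ D → ∀ z ∈ Z l, (o l).le z (m l) := by
    intro l hlD z hz
    obtain ⟨i, hiD, hile⟩ := hwit z
    have := (hZmem l z).mp hz i hiD hile
    rwa [← this]
  have hZdisj : ∀ z : T, z ∈ Z j → z ∈ Z k → False := by
    intro z hzj hzk
    obtain ⟨i, hiD, hile⟩ := hwit z
    have h1 := (hZmem j z).mp hzj i hiD hile
    have h2 := (hZmem k z).mp hzk i hiD hile
    exact hjk (h1 ▸ h2)
  have hZnotY : ∀ (l l' : I), l' ∈ D → l ≠ l' → m l = m l' → ∀ z ∈ Z l, z ∉ Y := by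
    intro l l' hl'D hll' hmll' z hz hzY
    obtain ⟨i, hiD, hile⟩ := hwit z
    have hi : i = l := (hZmem l z).mp hz i hiD hile
    have hzm : z = m l := hyeq z hzY l (hi ▸ hile)
    have : (o l').le z (m l') := by rw [hzm, hmll']; exact hrefl l' (m l')
    exact hll' ((hZmem l z).mp hz l' hl'D this).symm
  -- candidates
  set cand : I → Finset T × Finset I := fun l =>
    if h : (Z l).Nonempty then (insert (@Finset.max' T (o l) (Z l) h) Y, D) else (Y, D.erase l)
    with hcand
  -- construction: nonempty case
  have hfaceNe : ∀ (l : I) (hne : (Z l).Nonempty), l ∈ D → (∀ z ∈ Z l, z ∉ Y) →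
      IsFace o c Y D (insert (@Finset.max' T (o l) (Z l) hne) Y) D := by
    intro l hne hlD hnotY
    set x : T := @Finset.max' T (o l) (Z l) hne with hx
    have hxZ : x ∈ Z l := @Finset.max'_mem T (o l) (Z l) hne
    have hxY : x ∉ Y := hnotY x hxZ
    have hXne : (insert x Y).Nonempty := Finset.insert_nonempty x Y
    refine ⟨h1', ⟨⟨hDne, ?_, ?_⟩, ?_⟩, Or.inl ⟨rfl, x, Finset.mem_insert_self x Y,
      (Finset.erase_insert hxY).symm⟩⟩
    · -- dominance of insert x Y w.r.t. D
      intro hXne'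
      rintro ⟨y, hy⟩
      set M : I → T := fun i => @Finset.min' T (o i) (insert x Y) hXne' with hM
      have hMx : ∀ i, (o i).le (M i) x :=
        fun i => @Finset.min'_le T (o i) (insert x Y) x (Finset.mem_insert_self x Y)
      have hMm : ∀ i, (o i).le (M i) (m i) :=
        fun i => @Finset.min'_le T (o i) (insert x Y) (m i)
          (Finset.mem_insert_of_mem (hmY i))
      have hMcases : ∀ i, M i = x ∨ M i = m i := by
        intro i
        have hMmem : M i ∈ insert x Y := @Finset.min'_mem T (o i) (insert x Y) hXne'
        rcases Finset.mem_insert.mp hMmem with h | h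
        · exact Or.inl h
        · exact Or.inr (hanti i (M i) (m i) (hMm i) (hm_min i (M i) h))
      -- y belongs to Z l
      have hyZ : y ∈ Z l := by
        refine (hZmem l y).mpr ?_
        intro i' hi'D hle'
        have hlt' : (o i').lt (M i') y := hy i' hi'D
        rcases hMcases i' with hMi | hMi
        · have : (o i').le x (m i') := hMi ▸ hMm i'
          exact (hZmem l x).mp hxZ i' hi'D this
        · rw [hMi] at hlt'
          exact absurd hlt' (hnlt_of_le i' y (m i') hle')
      have hylex : (o l).le y x := @Finset.le_max' T (o l) (Z l) y hyZ
      have hylem : (o l).le y (m l) := by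
        obtain ⟨i, hiD, hile⟩ := hwit y
        have : i = l := (hZmem l y).mp hyZ i hiD hile
        exact this ▸ hile
      have : (o l).le y (M l) := by
        rcases hMcases l with h | h
        · rw [h]; exact hylex
        · rw [h]; exact hylem
      exact hnlt_of_le l y (M l) this (hy l hlD)
    · -- color condition
      refine le_trans (Finset.card_le_card ?_) hcol
      exact Finset.sdiff_subset_sdiff (Finset.Subset.refl D)
        (Finset.image_subset_image (Finset.subset_insert x Y))
    · -- cardinality
      rw [Finset.card_insert_of_notMem hxY]
      exact hcard
  -- construction: empty case
  have hfaceEmpty : ∀ (l : I), l ∈ D → Z l = ∅ → IsFace o c Y D Y (D.erase l) := by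
    intro l hlD hZl
    have hcardE : (D.erase l).card = Y.card := by
      rw [Finset.card_erase_of_mem hlD]; omega
    refine ⟨h1', ⟨⟨?_, ?_, ?_⟩, hcardE⟩, Or.inr ⟨rfl, l, Finset.notMem_erase l D,
      (Finset.insert_erase hlD).symm⟩⟩
    · rw [← Finset.card_pos, hcardE, Finset.card_pos]; exact hY
    · -- dominance of Y w.r.t. D.erase l
      intro hX
      rintro ⟨y, hy⟩
      have hyZ : y ∈ Z l := by
        refine (hZmem l y).mpr ?_
        intro i' hi'D hle'
        by_contra hi'l
        exact hnlt_of_le i' y (m i') hle' (hy i' (Finset.mem_erase.mpr ⟨hi'l, hi'D⟩))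
      rw [hZl] at hyZ
      exact absurd hyZ (Finset.notMem_empty y)
    · refine le_trans (Finset.card_le_card ?_) hcol
      exact Finset.sdiff_subset_sdiff (Finset.erase_subset l D) (Finset.Subset.refl _)
  -- candidates are faces
  have hcandface : ∀ (l : I), l ∈ D → (∀ z ∈ Z l, z ∉ Y) →
      IsFace o c Y D (cand l).1 (cand l).2 := by
    intro l hlD hnotY
    by_cases hne : (Z l).Nonempty
    · rw [hcand]; simp only [dif_pos hne]
      exact hfaceNe l hne hlD hnotY
    · rw [hcand]; simp only [dif_neg hne]
      exact hfaceEmpty l hlD (Finset.not_nonempty_iff_eq_empty.mp hne)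
  have hjnotY : ∀ z ∈ Z j, z ∉ Y := hZnotY j k hkD hjk hmjk
  have hknotY : ∀ z ∈ Z k, z ∉ Y := hZnotY k j hjD (Ne.symm hjk) hmjk.symm
  -- distinctness
  have hne : cand j ≠ cand k := by
    rw [hcand]
    by_cases hnj : (Z j).Nonempty <;> by_cases hnk : (Z k).Nonempty
    · simp only [dif_pos hnj, dif_pos hnk]
      intro h
      have h1 := congrArg Prod.fst h
      simp only at h1
      set xj := @Finset.max' T (o j) (Z j) hnj
      set xk := @Finset.max' T (o k) (Z k) hnk
      have hxj : xj ∈ Z j := @Finset.max'_mem T (o j) (Z j) hnj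
      have hxk : xk ∈ Z k := @Finset.max'_mem T (o k) (Z k) hnk
      have : xj ∈ insert xk Y := h1 ▸ Finset.mem_insert_self xj Y
      rcases Finset.mem_insert.mp this with h' | h'
      · exact hZdisj xj hxj (h' ▸ hxk)
      · exact hjnotY xj hxj h'
    · simp only [dif_pos hnj, dif_neg hnk]
      intro h
      have h1 := congrArg Prod.fst h
      simp only at h1
      have hxj : @Finset.max' T (o j) (Z j) hnj ∈ Z j := @Finset.max'_mem T (o j) (Z j) hnj
      exact hjnotY _ hxj (h1 ▸ Finset.mem_insert_self _ Y)
    · simp only [dif_neg hnj, dif_pos hnk]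
      intro h
      have h1 := congrArg Prod.fst h
      simp only at h1
      have hxk : @Finset.max' T (o k) (Z k) hnk ∈ Z k := @Finset.max'_mem T (o k) (Z k) hnk
      exact hknotY _ hxk (h1.symm ▸ Finset.mem_insert_self _ Y)
    · simp only [dif_neg hnj, dif_neg hnk]
      intro h
      have h2 := congrArg Prod.snd h
      simp only at h2
      have : k ∈ D.erase j := Finset.mem_erase.mpr ⟨fun h => hjk h.symm, hkD⟩
      rw [h2] at this
      exact (Finset.notMem_erase k D) this
  -- completeness
  have hcomplete : ∀ X C, IsFace o c Y D X C → (X, C) = cand j ∨ (X, C) = cand k := by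
    intro X C hf
    obtain ⟨_, ⟨⟨hCne, hdomX, hcolX⟩, hcardXC⟩, hdisj⟩ := hf
    rcases hdisj with ⟨hDC, x0, hx0X, hYX⟩ | ⟨hXY, i0, hi0C, hDiC⟩
    · -- added an element
      have hx0Y : x0 ∉ Y := by rw [hYX]; exact Finset.notMem_erase x0 X
      have hXeq : X = insert x0 Y := by rw [hYX, Finset.insert_erase hx0X]
      subst hDC
      rw [hXeq] at hdomX
      have hXne : (insert x0 Y).Nonempty := Finset.insert_nonempty x0 Y
      set M : I → T := fun i => @Finset.min' T (o i) (insert x0 Y) hXne with hM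
      have hwitX : ∀ z : T, ∃ i ∈ D, (o i).le z (M i) :=
        fun z => hwitOf (insert x0 Y) D hXne hdomX z
      have hMx : ∀ i, (o i).le (M i) x0 :=
        fun i => @Finset.min'_le T (o i) (insert x0 Y) x0 (Finset.mem_insert_self x0 Y)
      have hMm : ∀ i, (o i).le (M i) (m i) :=
        fun i => @Finset.min'_le T (o i) (insert x0 Y) (m i)
          (Finset.mem_insert_of_mem (hmY i))
      have hx0ne : ∀ i : I, x0 ≠ m i := fun i h => hx0Y (h ▸ hmY i)
      -- every witness of x0 is j or k
      have hsubjk : ∀ i ∈ D, (o i).le x0 (m i) → i = j ∨ i = k := by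
        intro i hiD hle
        by_contra hcon
        push_neg at hcon
        obtain ⟨i', hi'D, hle'⟩ := hwitX (m i)
        have hle'' : (o i').le (m i) (m i') := htrans i' (m i) (M i') (m i') hle' (hMm i')
        have heq : m i = m i' := hyeq (m i) (hmY i) i' hle''
        have hi'i : i' = i := huniq i hiD hcon.1 hcon.2 i' hi'D heq.symm
        subst hi'i
        have h5 : (o i').le (m i') (x0) := htrans i' (m i') (M i') x0 hle' (hMx i')
        exact hx0ne i' (hanti i' x0 (m i') hle h5)
      -- not both j and k are witnesses of x0
      have hnotboth : ¬ ((o j).le x0 (m j) ∧ (o k).le x0 (m k)) := by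
        rintro ⟨hwj, hwk⟩
        obtain ⟨i', hi'D, hle'⟩ := hwitX (m j)
        have hle'' : (o i').le (m j) (m i') := htrans i' (m j) (M i') (m i') hle' (hMm i')
        have heq : m j = m i' := hyeq (m j) (hmY j) i' hle''
        have : i' = j ∨ i' = k := hfib i' hi'D heq.symm
        have hwx : (o i').le x0 (m i') := by
          rcases this with rfl | rfl
          · exact hwj
          · exact hwk
        have h5 : (o i').le (m i') x0 := by
          have := htrans i' (m j) (M i') x0 hle' (hMx i')
          rwa [heq] at this
        exact hx0ne i' (hanti i' x0 (m i') hwx h5)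
      -- x0 is in Z j or Z k, generic step
      have hstep : ∀ l l' : I, l ∈ D → l' ∈ D → ((l = j ∧ l' = k) ∨ (l = k ∧ l' = j)) →
          (o l).le x0 (m l) → (X, D) = cand l := by
        intro l l' hlD hl'D hll' hwl
        have hnb : ¬ ((o l).le x0 (m l) ∧ (o l').le x0 (m l')) := by
          rcases hll' with ⟨rfl, rfl⟩ | ⟨rfl, rfl⟩
          · exact hnotboth
          · rintro ⟨ha, hb⟩; exact hnotboth ⟨hb, ha⟩
        have hx0Z : x0 ∈ Z l := by
          refine (hZmem l x0).mpr ?_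
          intro i' hi'D hle'
          rcases hsubjk i' hi'D hle' with h | h
          · rcases hll' with ⟨rfl, rfl⟩ | ⟨rfl, rfl⟩
            · exact h
            · exact absurd ⟨hwl, h ▸ hle'⟩ hnb
          · rcases hll' with ⟨rfl, rfl⟩ | ⟨rfl, rfl⟩
            · exact absurd ⟨hwl, h ▸ hle'⟩ hnb
            · exact h
        have hZlne : (Z l).Nonempty := ⟨x0, hx0Z⟩
        have hmax : ∀ z ∈ Z l, (o l).le z x0 := by
          intro z hz
          obtain ⟨i', hi'D, hle'⟩ := hwitX z
          have : i' = l := (hZmem l z).mp hz i' hi'D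
            (htrans i' z (M i') (m i') hle' (hMm i'))
          subst this
          exact htrans i' z (M i') x0 hle' (hMx i')
        have hx0max : x0 = @Finset.max' T (o l) (Z l) hZlne :=
          hanti l x0 _ (@Finset.le_max' T (o l) (Z l) x0 hx0Z)
            (hmax _ (@Finset.max'_mem T (o l) (Z l) hZlne))
        rw [hcand]
        simp only [dif_pos hZlne]
        rw [hXeq, hx0max]
      obtain ⟨i0, hi0D, hi0le⟩ := hwit x0
      rcases hsubjk i0 hi0D hi0le with rfl | rfl
      · exact Or.inl (hstep i0 k hi0D hkD (Or.inl ⟨rfl, rfl⟩) hi0le)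
      · exact Or.inr (hstep i0 j hi0D hjD (Or.inr ⟨rfl, rfl⟩) hi0le)
    · -- removed a color
      have hXeq : X = Y := hXY.symm
      subst hXeq
      have hi0D : i0 ∈ D := by rw [hDiC]; exact Finset.mem_insert_self i0 C
      have hCD : C = D.erase i0 := by rw [hDiC, Finset.erase_insert hi0C]
      have hCsub : C ⊆ D := by rw [hDiC]; exact Finset.subset_insert i0 C
      have hwitC : ∀ z : T, ∃ i ∈ C, (o i).le z (m i) := fun z => hwitOf X C hY hdomX z
      -- i0 = j or i0 = k
      have hi0jk : i0 = j ∨ i0 = k := by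
        by_contra hcon
        push_neg at hcon
        obtain ⟨i', hi'C, hle'⟩ := hwitC (m i0)
        have heq : m i0 = m i' := hyeq (m i0) (hmY i0) i' hle'
        have : i' = i0 := huniq i0 hi0D hcon.1 hcon.2 i' (hCsub hi'C) heq.symm
        exact hi0C (this ▸ hi'C)
      have hZempty : Z i0 = ∅ := by
        rw [Finset.eq_empty_iff_forall_notMem]
        intro z hz
        obtain ⟨i', hi'C, hle'⟩ := hwitC z
        have : i' = i0 := (hZmem i0 z).mp hz i' (hCsub hi'C) hle'
        exact hi0C (this ▸ hi'C)
      have hres : (X, C) = cand i0 := by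
        rw [hcand]
        simp only [dif_neg (by rw [hZempty]; exact Finset.not_nonempty_empty : ¬ (Z i0).Nonempty)]
        rw [hCD]
      rcases hi0jk with rfl | rfl
      · exact Or.inl hres
      · exact Or.inr hres
  constructor
  · refine ⟨cand j, cand k, hne, fun r => ⟨fun hf => ?_, fun h => ?_⟩⟩
    · exact hcomplete r.1 r.2 hf
    · rcases h with rfl | rfl
      · exact hcandface j hjD hjnotY
      · exact hcandface k hkD hknotY
  · -- second part: balanced or same type
    intro X C hf
    obtain ⟨_, ⟨⟨_, _, _⟩, hcardXC⟩, hdisj⟩ := hf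
    have hsub : C \ X.image c ⊆ D \ Y.image c := by
      rcases hdisj with ⟨hDC, x0, hx0X, hYX⟩ | ⟨hXY, i0, hi0C, hDiC⟩
      · subst hDC
        refine Finset.sdiff_subset_sdiff (Finset.Subset.refl D) (Finset.image_subset_image ?_)
        rw [hYX]; exact Finset.erase_subset x0 X
      · subst hXY
        refine Finset.sdiff_subset_sdiff ?_ (Finset.Subset.refl _)
        rw [hDiC]; exact Finset.subset_insert i0 C
    by_cases hcase : C \ X.image c = D \ Y.image c
    · exact Or.inr hcase
    · left
      have hempty : C \ X.image c = ∅ := by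
        by_contra hne'
        have h1le : 1 ≤ (C \ X.image c).card :=
          Finset.card_pos.mpr (Finset.nonempty_of_ne_empty hne')
        have h2le : (D \ Y.image c).card ≤ (C \ X.image c).card :=
          le_trans hcol h1le
        exact hcase (Finset.eq_of_subset_of_card_le hsub h2le)
      have hCsub : C ⊆ X.image c := Finset.sdiff_eq_empty_iff_subset.mp hempty
      exact Finset.eq_of_subset_of_card_le hCsub
        (le_trans Finset.card_image_le (le_of_eq hcardXC.symm))
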